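/- Fix constants μ < 0, σ > 0, r > 0, α ∈ (0,1), k > 0. Let γ₋ := 1/2 − μ/σ² − √((1/2 − μ/σ²)² + 2r/σ²) (so γ₋ < 0), δ(α) := αμ + σ²α(α−1)/2, and D := r − δ(α) (so D > 0). On (0,∞) define I(x) := (1/γ₋)(α x^{α−γ₋}/D − k x^{1−γ₋}), J(x) := (1 − α/γ₋) x^α/D − k x (1 − 1/γ₋), z* := (α/(kD))^{1/(1−α)}, and x̂ := (α(α−γ₋)/(kD(1−γ₋)))^{1/(1−α)}. Then for every c₂ ∈ (0, (1−α)·(z*)^α/D) there exist θ* ∈ (0,x̂) and z₂ ∈ (x̂,z*) such that I(θ*) = I(z₂) and J(z₂) − J(θ*) = c₂. -/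

import Mathlib

open Set

set_option maxHeartbeats 1000000 in
/-- Proposition 7 of the paper, fully explicit for the GBM example. -/
theorem stmt1
    (μ σ r α k γm δα D zstar xhat : ℝ) (I J : ℝ → ℝ)
    (hμ : μ < 0) (hσ : 0 < σ) (hr : 0 < r) (hα : α ∈ Set.Ioo (0:ℝ) 1) (hk : 0 < k)
    (hγm : γm = 1/2 - μ/σ^2 - Real.sqrt ((1/2 - μ/σ^2)^2 + 2*r/σ^2))
    (hδ : δα = α*μ + σ^2*α*(α-1)/2)
    (hD : D = r - δα)
    (hI : ∀ x, 0 < x → I x = (1/γm) * (α * x ^ (α - γm) / D - k * x ^ (1 - γm)))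
    (hJ : ∀ x, 0 < x → J x = (1 - α/γm) * x ^ α / D - k * x * (1 - 1/γm))
    (hz : zstar = (α/(k*D)) ^ (1/(1-α)))
    (hx : xhat = (α*(α-γm)/(k*D*(1-γm))) ^ (1/(1-α))) :
    ∀ c₂, 0 < c₂ → c₂ < (1-α) * zstar ^ α / D →
      ∃ θ z₂, θ ∈ Set.Ioo 0 xhat ∧ z₂ ∈ Set.Ioo xhat zstar ∧
        I θ = I z₂ ∧ J z₂ - J θ = c₂ := by
  obtain ⟨hα0, hα1⟩ := hα
  have hσ2 : (0:ℝ) < σ^2 := by positivity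
  -- γm < 0
  have hq : (0:ℝ) < 1/2 - μ/σ^2 := by
    have : μ/σ^2 < 0 := div_neg_of_neg_of_pos hμ hσ2
    linarith
  have hγ : γm < 0 := by
    have h1 : Real.sqrt ((1/2 - μ/σ^2)^2) < Real.sqrt ((1/2 - μ/σ^2)^2 + 2*r/σ^2) := by
      apply Real.sqrt_lt_sqrt (by positivity)
      have : 0 < 2*r/σ^2 := by positivity
      linarith
    rw [Real.sqrt_sq hq.le] at h1
    rw [hγm]; linarith
  have hγne : γm ≠ 0 := ne_of_lt hγ
  -- D > 0
  have hDpos : 0 < D := by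
    rw [hD, hδ]
    have h1 : α*μ < 0 := mul_neg_of_pos_of_neg hα0 hμ
    have h2 : σ^2*α*(α-1)/2 < 0 := by
      have : σ^2*α > 0 := mul_pos hσ2 hα0
      nlinarith
    linarith
  have hDne : D ≠ 0 := ne_of_gt hDpos
  have hkD : 0 < k*D := mul_pos hk hDpos
  have hA : 0 < α - γm := by linarith
  have hB : 0 < 1 - γm := by linarith
  have h1α : 0 < 1 - α := by linarith
  have hcz : 0 < α/(k*D) := div_pos hα0 hkD
  have hcx : 0 < α*(α-γm)/(k*D*(1-γm)) := by positivity
  have hzpos : 0 < zstar := by rw [hz]; positivity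
  have hxpos : 0 < xhat := by rw [hx]; positivity
  -- powers of xhat and zstar
  have hpow : ∀ c : ℝ, 0 < c → (c ^ (1/(1-α))) ^ (1-α) = c := by
    intro c hc
    rw [← Real.rpow_mul hc.le, one_div, inv_mul_cancel₀ h1α.ne', Real.rpow_one]
  have hxhat_pow : xhat ^ (1-α) = α*(α-γm)/(k*D*(1-γm)) := by
    rw [hx]; exact hpow _ hcx
  have hzstar_pow : zstar ^ (1-α) = α/(k*D) := by
    rw [hz]; exact hpow _ hcz
  have hxhat_pow' : xhat ^ (α-1) = k*D*(1-γm)/(α*(α-γm)) := by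
    have h0 : xhat ^ (α-1) = (xhat ^ (1-α))⁻¹ := by
      rw [show α - 1 = -(1-α) by ring, Real.rpow_neg hxpos.le]
    rw [h0, hxhat_pow, inv_div]
  have hzstar_pow' : zstar ^ (α-1) = k*D/α := by
    have h0 : zstar ^ (α-1) = (zstar ^ (1-α))⁻¹ := by
      rw [show α - 1 = -(1-α) by ring, Real.rpow_neg hzpos.le]
    rw [h0, hzstar_pow, inv_div]
  -- xhat < zstar
  have hxz : xhat < zstar := by
    rw [hx, hz]
    apply Real.rpow_lt_rpow hcx.le ?_ (by positivity)
    rw [div_lt_div_iff₀ (by positivity) hkD]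
    nlinarith [mul_lt_mul_of_pos_left (show α - γm < 1 - γm by linarith) (mul_pos hα0 hkD)]
  -- derivative of I
  have hasDerivI : ∀ x : ℝ, 0 < x → HasDerivAt I
      ((1/γm) * x^(-γm) * (α*(α-γm)*x^(α-1)/D - k*(1-γm))) x := by
    intro x hxp
    have h1 : HasDerivAt (fun y:ℝ => y ^ (α-γm)) ((α-γm) * x^(α-γm-1)) x :=
      Real.hasDerivAt_rpow_const (Or.inl hxp.ne')
    have h2 : HasDerivAt (fun y:ℝ => y ^ (1-γm)) ((1-γm) * x^(1-γm-1)) x :=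
      Real.hasDerivAt_rpow_const (Or.inl hxp.ne')
    have h3 : HasDerivAt (fun y:ℝ => (1/γm)*(α*y^(α-γm)/D - k*y^(1-γm)))
        ((1/γm)*(α*((α-γm)*x^(α-γm-1))/D - k*((1-γm)*x^(1-γm-1)))) x :=
      (((h1.const_mul α).div_const D).sub (h2.const_mul k)).const_mul (1/γm)
    have heq : I =ᶠ[nhds x] (fun y:ℝ => (1/γm)*(α*y^(α-γm)/D - k*y^(1-γm))) := by
      filter_upwards [Ioi_mem_nhds hxp] with y hy
      exact hI y hy
    have h4 := h3.congr_of_eventuallyEq heq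
    refine h4.congr_deriv ?_
    have e1 : x^(α-γm-1) = x^(α-1) * x^(-γm) := by
      rw [show α-γm-1 = (α-1) + (-γm) by ring, Real.rpow_add hxp]
    have e2 : x^(1-γm-1) = x^(-γm) := by
      rw [show (1:ℝ)-γm-1 = -γm by ring]
    rw [e1, e2]; ring
  have hIcont : ∀ x : ℝ, 0 < x → ContinuousAt I x := fun x hx =>
    (hasDerivI x hx).continuousAt
  -- continuity of J
  have hJcont : ∀ x : ℝ, 0 < x → ContinuousAt J x := by
    intro x hxp
    have h1 : ContinuousAt (fun y:ℝ => (1-α/γm) * y ^ α / D - k*y*(1-1/γm)) x := by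
      have hr1 := Real.continuousAt_rpow_const x α (Or.inl hxp.ne')
      exact ((hr1.const_mul _).div_const _).sub
        ((continuousAt_const.mul continuousAt_id).mul continuousAt_const)
    apply h1.congr
    filter_upwards [Ioi_mem_nhds hxp] with y hy
    exact (hJ y hy).symm
  -- strict antitonicity on (0, xhat]
  have hanti : StrictAntiOn I (Ioc 0 xhat) := by
    apply strictAntiOn_of_deriv_neg (convex_Ioc 0 xhat)
    · exact fun x hx => (hIcont x hx.1).continuousWithinAt
    · intro x hx
      rw [interior_Ioc] at hx
      have hxp : 0 < x := hx.1
      rw [(hasDerivI x hxp).deriv]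
      have hlt : xhat ^ (α-1) < x ^ (α-1) :=
        Real.rpow_lt_rpow_of_neg hxp hx.2 (by linarith)
      rw [hxhat_pow'] at hlt
      have hinner : 0 < α*(α-γm)*x^(α-1)/D - k*(1-γm) := by
        have h5 := (div_lt_iff₀ (by positivity : (0:ℝ) < α*(α-γm))).mp hlt
        rw [sub_pos, lt_div_iff₀ hDpos]
        nlinarith
      exact mul_neg_of_neg_of_pos
        (mul_neg_of_neg_of_pos (one_div_neg.mpr hγ) (Real.rpow_pos_of_pos hxp _)) hinner
  -- strict monotonicity on [xhat, zstar]
  have hmono : StrictMonoOn I (Icc xhat zstar) := by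
    apply strictMonoOn_of_deriv_pos (convex_Icc _ _)
    · exact fun x hx => (hIcont x (lt_of_lt_of_le hxpos hx.1)).continuousWithinAt
    · intro x hx
      rw [interior_Icc] at hx
      have hxp : 0 < x := lt_trans hxpos hx.1
      rw [(hasDerivI x hxp).deriv]
      have hlt : x ^ (α-1) < xhat ^ (α-1) :=
        Real.rpow_lt_rpow_of_neg hxpos hx.1 (by linarith)
      rw [hxhat_pow'] at hlt
      have hinner : α*(α-γm)*x^(α-1)/D - k*(1-γm) < 0 := by
        have h5 := (lt_div_iff₀ (by positivity : (0:ℝ) < α*(α-γm))).mp hlt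
        rw [sub_neg, div_lt_iff₀ hDpos]
        nlinarith
      exact mul_pos_of_neg_of_neg
        (mul_neg_of_neg_of_pos (one_div_neg.mpr hγ) (Real.rpow_pos_of_pos hxp _)) hinner
  -- I is negative on (0, zstar)
  have hIneg : ∀ x : ℝ, 0 < x → x < zstar → I x < 0 := by
    intro x hxp hxz'
    rw [hI x hxp]
    have hlt : zstar ^ (α-1) < x ^ (α-1) :=
      Real.rpow_lt_rpow_of_neg hxp hxz' (by linarith)
    rw [hzstar_pow'] at hlt
    have e1 : α * x^(α-γm)/D - k*x^(1-γm) = x^(1-γm) * (α * x^(α-1) - k*D)/D := by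
      rw [show α-γm = (α-1)+(1-γm) by ring, Real.rpow_add hxp]
      field_simp
    rw [e1]
    apply mul_neg_of_neg_of_pos (one_div_neg.mpr hγ)
    apply div_pos _ hDpos
    apply mul_pos (Real.rpow_pos_of_pos hxp _)
    have h5 := (div_lt_iff₀ hα0).mp hlt
    linarith
  -- key identity at zstar
  have hkz : k * zstar = α * zstar^α / D := by
    have h0 : zstar = zstar^α * (α/(k*D)) := by
      nth_rewrite 1 [show zstar = zstar ^ (1:ℝ) from (Real.rpow_one zstar).symm]
      rw [show (1:ℝ) = α + (1-α) by ring, Real.rpow_add hzpos, hzstar_pow]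
    nth_rewrite 1 [h0]
    field_simp
  have hIz : I zstar = 0 := by
    rw [hI zstar hzpos]
    have e1 : α * zstar^(α-γm)/D - k*zstar^(1-γm) = zstar^(-γm) * (α*zstar^α/D - k*zstar) := by
      rw [show α-γm = α + (-γm) by ring, show (1:ℝ)-γm = 1 + (-γm) by ring,
        Real.rpow_add hzpos, Real.rpow_add hzpos, Real.rpow_one]
      ring
    rw [e1, hkz, sub_self, mul_zero, mul_zero]
  have hJz : J zstar = (1-α) * zstar^α / D := by
    rw [hJ zstar hzpos]
    have h0 : k * zstar * (1 - 1/γm) = α * zstar^α/D * (1-1/γm) := by rw [hkz]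
    rw [h0]
    field_simp; ring
  -- limits at 0+
  have hrpow0 : ∀ p : ℝ, 0 < p →
      Filter.Tendsto (fun x:ℝ => x ^ p) (nhdsWithin 0 (Ioi 0)) (nhds 0) := by
    intro p hp
    have h := (Real.continuousAt_rpow_const 0 p (Or.inr hp.le)).tendsto
    rw [Real.zero_rpow hp.ne'] at h
    exact h.mono_left nhdsWithin_le_nhds
  have htendI : Filter.Tendsto I (nhdsWithin 0 (Ioi 0)) (nhds 0) := by
    have h1 := hrpow0 _ hA
    have h2 := hrpow0 _ hB
    have h3 : Filter.Tendsto (fun x:ℝ => (1/γm)*(α*x^(α-γm)/D - k*x^(1-γm)))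
        (nhdsWithin 0 (Ioi 0)) (nhds ((1/γm)*(α*(0:ℝ)/D - k*0))) :=
      (((h1.const_mul α).div_const D).sub (h2.const_mul k)).const_mul (1/γm)
    rw [show ((1/γm)*(α*(0:ℝ)/D - k*0)) = 0 by ring] at h3
    exact Filter.Tendsto.congr'
      (by filter_upwards [self_mem_nhdsWithin] with y hy; exact (hI y hy).symm) h3
  have htendJ : Filter.Tendsto J (nhdsWithin 0 (Ioi 0)) (nhds 0) := by
    have h1 := hrpow0 _ hα0
    have h2 : Filter.Tendsto (fun x:ℝ => k*x*(1-1/γm)) (nhdsWithin 0 (Ioi 0)) (nhds 0) := by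
      have hc : Continuous (fun x:ℝ => k*x*(1-1/γm)) := by continuity
      have h2' := hc.tendsto 0
      rw [show k*(0:ℝ)*(1-1/γm) = 0 by ring] at h2'
      exact h2'.mono_left nhdsWithin_le_nhds
    have h3 := ((h1.const_mul (1-α/γm)).div_const D).sub h2
    rw [show ((1-α/γm)*(0:ℝ)/D - 0) = 0 by ring] at h3
    exact Filter.Tendsto.congr'
      (by filter_upwards [self_mem_nhdsWithin] with y hy; exact (hJ y hy).symm) h3
  -- main argument
  intro c₂ hc0 hc1
  set M := (1-α) * zstar^α/D with hM
  set ε := (M - c₂)/2 with hε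
  have hεpos : 0 < ε := by rw [hε]; linarith
  -- small t where |J| < ε
  have hJsmall : ∀ᶠ x in nhdsWithin 0 (Ioi 0), |J x| < ε := by
    have h := htendJ.eventually (eventually_abs_sub_lt (0:ℝ) hεpos)
    simpa using h
  obtain ⟨t, ht, htsub⟩ := mem_nhdsGT_iff_exists_Ioo_subset.mp hJsmall
  have ht0 : (0:ℝ) < t := ht
  set τ := min t xhat / 2 with hτ
  have hτ0 : 0 < τ := by rw [hτ]; positivity
  have hτt : τ < t := by
    rw [hτ]
    have := min_le_left t xhat
    linarith
  have hτx : τ < xhat := by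
    rw [hτ]
    have := min_le_right t xhat
    linarith
  have hIτ : I τ < 0 := hIneg τ hτ0 (lt_trans hτx hxz)
  -- choose b close to zstar
  have e1' : ∀ᶠ x in nhdsWithin zstar (Iio zstar), x ∈ Ioo xhat zstar :=
    Ioo_mem_nhdsLT_of_mem (right_mem_Ioc.mpr hxz)
  have e2 : ∀ᶠ x in nhds zstar, I τ < I x := by
    have hIt : Filter.Tendsto I (nhds zstar) (nhds 0) := by
      rw [← hIz]; exact (hIcont zstar hzpos).tendsto
    exact hIt.eventually (eventually_gt_nhds hIτ)
  have e3 : ∀ᶠ x in nhds zstar, M - ε < J x := by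
    have hJt : Filter.Tendsto J (nhds zstar) (nhds M) := by
      rw [← hJz]; exact (hJcont zstar hzpos).tendsto
    exact hJt.eventually (eventually_gt_nhds (by linarith))
  obtain ⟨b, hbmem, hIb', hJb'⟩ :=
    (e1'.and ((e2.and e3).filter_mono nhdsWithin_le_nhds)).exists
  have hbpos : 0 < b := lt_trans hxpos hbmem.1
  have hIbneg : I b < 0 := hIneg b hbpos hbmem.2
  -- choose a close to 0
  have haev : ∀ᶠ x in nhdsWithin 0 (Ioi 0), (I b < I x ∧ x ∈ Ioo 0 τ) := by
    have e4 := (htendI.eventually (eventually_gt_nhds hIbneg))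
    have e5 : ∀ᶠ x in nhdsWithin 0 (Ioi 0), x ∈ Ioo 0 τ :=
      Ioo_mem_nhdsGT_of_mem (left_mem_Ico.mpr hτ0)
    exact e4.and e5
  obtain ⟨a, hIa, ha⟩ := haev.exists
  have hax : a < xhat := lt_trans ha.2 hτx
  have hIccsub : Icc a xhat ⊆ Ioc 0 xhat := fun y hy => ⟨lt_of_lt_of_le ha.1 hy.1, hy.2⟩
  have hcontL : ContinuousOn I (Icc a xhat) := fun y hy =>
    (hIcont y (lt_of_lt_of_le ha.1 hy.1)).continuousWithinAt
  have hIxa : I xhat ≤ I a :=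
    (hanti ⟨ha.1, hax.le⟩ ⟨hxpos, le_refl _⟩ hax).le
  -- image membership for the right branch
  have hmem : ∀ z ∈ Icc xhat b, I z ∈ Icc (I xhat) (I a) := by
    intro z hz
    constructor
    · exact hmono.monotoneOn ⟨le_refl _, hxz.le⟩ ⟨hz.1, le_trans hz.2 hbmem.2.le⟩ hz.1
    · have h1 : I z ≤ I b :=
        hmono.monotoneOn ⟨hz.1, le_trans hz.2 hbmem.2.le⟩ ⟨hbmem.1.le, hbmem.2.le⟩ hz.2
      linarith
  -- homeomorphism for the left branch
  have hmapmem : ∀ p : Icc a xhat, I p.1 ∈ Icc (I xhat) (I a) := by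
    rintro ⟨p, hp⟩
    exact ⟨hanti.antitoneOn (hIccsub hp) ⟨hxpos, le_refl _⟩ hp.2,
      hanti.antitoneOn ⟨ha.1, hax.le⟩ (hIccsub hp) hp.1⟩
  have hebij : Function.Bijective (fun p : Icc a xhat => (⟨I p.1, hmapmem p⟩ : Icc (I xhat) (I a))) := by
    constructor
    · intro p q hpq
      exact Subtype.ext (hanti.injOn (hIccsub p.2) (hIccsub q.2) (congrArg Subtype.val hpq))
    · intro v
      obtain ⟨y, hy, hyv⟩ := intermediate_value_Icc' hax.le hcontL v.2
      exact ⟨⟨y, hy⟩, Subtype.ext hyv⟩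
  have hEcont : Continuous ((Equiv.ofBijective _ hebij : Icc a xhat ≃ Icc (I xhat) (I a)) :
      Icc a xhat → Icc (I xhat) (I a)) :=
    Continuous.subtype_mk hcontL.restrict _
  set H := hEcont.homeoOfEquivCompactToT2 with hH
  set g : ℝ → ℝ := fun z => (H.symm (projIcc (I xhat) (I a) hIxa (I z)) : ℝ) with hg
  have hgmem : ∀ z, g z ∈ Icc a xhat := fun z => (H.symm _).2
  have hHval : ∀ p : Icc a xhat, ((H p : Icc (I xhat) (I a)) : ℝ) = I p.1 := fun p => rfl
  have hgI : ∀ z ∈ Icc xhat b, I (g z) = I z := by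
    intro z hz
    have h1 : projIcc (I xhat) (I a) hIxa (I z) = ⟨I z, hmem z hz⟩ :=
      projIcc_of_mem hIxa (hmem z hz)
    have h2 := congrArg Subtype.val (H.apply_symm_apply (projIcc (I xhat) (I a) hIxa (I z)))
    rw [hHval] at h2
    rw [h2, h1]
  have hgcont : ContinuousOn g (Icc xhat b) := by
    have h1 : ContinuousOn I (Icc xhat b) := fun y hy =>
      (hIcont y (lt_of_lt_of_le hxpos hy.1)).continuousWithinAt
    have h2 : Continuous (fun v : ℝ => (H.symm (projIcc (I xhat) (I a) hIxa v) : ℝ)) :=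
      continuous_subtype_val.comp (H.symm.continuous.comp continuous_projIcc)
    exact h2.comp_continuousOn h1
  set F : ℝ → ℝ := fun z => J z - J (g z) with hF
  have hFcont : ContinuousOn F (Icc xhat b) := by
    have h1 : ContinuousOn J (Icc xhat b) := fun y hy =>
      (hJcont y (lt_of_lt_of_le hxpos hy.1)).continuousWithinAt
    have h2 : ContinuousOn (fun z => J (g z)) (Icc xhat b) := by
      apply ContinuousOn.comp (t := Icc a xhat)
        (fun y (hy : y ∈ Icc a xhat) => (hJcont y (lt_of_lt_of_le ha.1 hy.1)).continuousWithinAt)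
        hgcont
      intro z _
      exact hgmem z
    exact h1.sub h2
  have hgx : g xhat = xhat := by
    have h1 : I (g xhat) = I xhat := hgI xhat ⟨le_refl _, hbmem.1.le⟩
    exact hanti.injOn (hIccsub (hgmem xhat)) ⟨hxpos, le_refl _⟩ h1
  have hFx : F xhat = 0 := by rw [hF]; simp [hgx]
  -- F b > c₂
  have hIgb : I (g b) = I b := hgI b ⟨hbmem.1.le, le_refl _⟩
  have hgbτ : g b < τ := by
    by_contra hcon
    push_neg at hcon
    have h1 : I (g b) ≤ I τ :=
      hanti.antitoneOn ⟨hτ0, hτx.le⟩ (hIccsub (hgmem b)) hcon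
    rw [hIgb] at h1
    linarith
  have hJgb : |J (g b)| < ε :=
    htsub ⟨lt_of_lt_of_le ha.1 (hgmem b).1, lt_trans hgbτ hτt⟩
  have hFb : c₂ < F b := by
    have h1 : J (g b) < ε := (abs_lt.mp hJgb).2
    have h2 : F b = J b - J (g b) := rfl
    rw [h2]
    have : M - ε < J b := hJb'
    rw [hε] at *
    linarith
  -- IVT
  have hc₂mem : c₂ ∈ Icc (F xhat) (F b) := ⟨by rw [hFx]; exact hc0.le, hFb.le⟩
  obtain ⟨z₂, hz₂, hFz₂⟩ := intermediate_value_Icc hbmem.1.le hFcont hc₂mem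
  have hIθ : I (g z₂) = I z₂ := hgI z₂ hz₂
  have hz₂x : xhat < z₂ := by
    rcases eq_or_lt_of_le hz₂.1 with h | h
    · exfalso
      rw [← h] at hFz₂
      rw [hFx] at hFz₂
      linarith
    · exact h
  have hθx : g z₂ < xhat := by
    rcases lt_or_eq_of_le (hgmem z₂).2 with h | h
    · exact h
    · exfalso
      have h1 : I xhat < I z₂ :=
        hmono ⟨le_refl _, hxz.le⟩ ⟨hz₂.1, le_trans hz₂.2 hbmem.2.le⟩ hz₂x
      rw [← hIθ, h] at h1
      exact lt_irrefl _ h1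
  exact ⟨g z₂, z₂, ⟨lt_of_lt_of_le ha.1 (hgmem z₂).1, hθx⟩,
    ⟨hz₂x, lt_of_le_of_lt hz₂.2 hbmem.2⟩, hIθ, hFz₂⟩
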